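/- Let 0 < ν < 1 and 0 ≤ b < a. Then lim_{t→∞} t^{2ν} (I(t) − C_ν/t^ν) = (b^{2ν} / (2^ν Γ(ν+1))) · C_ν; that is, I(t) = C_ν/t^ν + (b^{2ν}/(2^ν Γ(ν+1))) · C_ν/t^{2ν} + o(t^{-2ν}) as t → ∞. -/

import Mathlib

open MeasureTheory Filter

/-- `F ν x t = (x^{2ν}/(2^ν Γ(ν))) ∫_t^∞ s^{-(ν+1)} exp(-x²/(2s)) ds`. -/
noncomputable def F (ν x t : ℝ) : ℝ :=
  (x ^ (2 * ν) / (2 ^ ν * Real.Gamma ν)) *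
    ∫ s in Set.Ioi t, s ^ (-(ν + 1)) * Real.exp (-x ^ 2 / (2 * s))

open Set

lemma intF (ν x : ℝ) (hν : 0 < ν) {t : ℝ} (ht : 0 < t) :
    IntegrableOn (fun s => s ^ (-(ν + 1)) * Real.exp (-x ^ 2 / (2 * s))) (Ioi t) := by
  have hg : IntegrableOn (fun s : ℝ => s ^ (-(ν + 1))) (Ioi t) :=
    integrableOn_Ioi_rpow_of_lt (by linarith) ht
  refine hg.integrable.mono' ?_ ?_
  · refine ContinuousOn.aestronglyMeasurable ?_ measurableSet_Ioi
    refine ContinuousOn.mul ?_ ?_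
    · exact fun s hs => (Real.continuousAt_rpow_const s _
        (Or.inl (ne_of_gt (ht.trans hs)))).continuousWithinAt
    · refine Real.continuous_exp.comp_continuousOn ?_
      exact ContinuousOn.div continuousOn_const (continuous_const.mul continuous_id).continuousOn
        (fun s hs => by have : 0 < s := ht.trans hs; positivity)
  · filter_upwards [ae_restrict_mem measurableSet_Ioi] with s hs
    have hs0 : 0 < s := ht.trans hs
    have h1 : Real.exp (-x ^ 2 / (2 * s)) ≤ 1 := by
      apply Real.exp_le_one_iff.mpr
      apply div_nonpos_of_nonpos_of_nonneg (neg_nonpos.mpr (by positivity)) (by positivity)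
    have : |s ^ (-(ν + 1)) * Real.exp (-x ^ 2 / (2 * s))|
        = s ^ (-(ν + 1)) * Real.exp (-x ^ 2 / (2 * s)) :=
      abs_of_nonneg (mul_nonneg (Real.rpow_nonneg hs0.le _) (Real.exp_pos _).le)
    rw [Real.norm_eq_abs, this]
    calc s ^ (-(ν + 1)) * Real.exp (-x ^ 2 / (2 * s)) ≤ s ^ (-(ν + 1)) * 1 := by
          exact mul_le_mul_of_nonneg_left h1 (Real.rpow_nonneg hs0.le _)
      _ = s ^ (-(ν + 1)) := mul_one _

lemma keyF (ν x : ℝ) (hν : 0 < ν) (hx : 0 ≤ x) {t : ℝ} (ht : 0 < t) :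
    |F ν x t - x ^ (2 * ν) / (2 ^ ν * Real.Gamma (ν + 1)) * t ^ (-ν)| ≤
      x ^ (2 * ν) / (2 ^ ν * Real.Gamma ν) * (x ^ 2 / 2) * (t ^ (-(ν + 1)) / (ν + 1)) := by
  have hΓ : 0 < Real.Gamma ν := Real.Gamma_pos_of_pos hν
  have h2 : (0:ℝ) < 2 ^ (ν:ℝ) := Real.rpow_pos_of_pos two_pos ν
  set K := x ^ (2 * ν) / (2 ^ ν * Real.Gamma ν) with hKdef
  have hK0 : 0 ≤ K := by
    apply div_nonneg (Real.rpow_nonneg hx _) (by positivity)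
  have hint1 : ∫ s in Ioi t, s ^ (-(ν + 1)) = t ^ (-ν) / ν := by
    rw [integral_Ioi_rpow_of_lt (by linarith) ht]
    have h : -(ν + 1) + 1 = -ν := by ring
    rw [h, neg_div_neg_eq]
  have hint2 : ∫ s in Ioi t, s ^ (-(ν + 2)) = t ^ (-(ν + 1)) / (ν + 1) := by
    rw [integral_Ioi_rpow_of_lt (by linarith) ht]
    have h : -(ν + 2) + 1 = -(ν + 1) := by ring
    rw [h, neg_div_neg_eq]
  have hc : x ^ (2 * ν) / (2 ^ ν * Real.Gamma (ν + 1)) * t ^ (-ν) = K * (t ^ (-ν) / ν) := by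
    rw [Real.Gamma_add_one hν.ne', hKdef,
      show (2:ℝ) ^ ν * (ν * Real.Gamma ν) = 2 ^ ν * Real.Gamma ν * ν by ring, ← div_div]
    ring
  have hfi := intF ν x hν ht
  have hgi : IntegrableOn (fun s : ℝ => s ^ (-(ν + 1))) (Ioi t) :=
    integrableOn_Ioi_rpow_of_lt (by linarith) ht
  have hdiff : F ν x t - x ^ (2 * ν) / (2 ^ ν * Real.Gamma (ν + 1)) * t ^ (-ν)
      = K * ∫ s in Ioi t, (s ^ (-(ν + 1)) * Real.exp (-x ^ 2 / (2 * s)) - s ^ (-(ν + 1))) := by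
    rw [integral_sub hfi hgi, hc, hint1, F]
    ring
  rw [hdiff, abs_mul, abs_of_nonneg hK0]
  have hbound : ‖∫ s in Ioi t, (s ^ (-(ν + 1)) * Real.exp (-x ^ 2 / (2 * s)) - s ^ (-(ν + 1)))‖
      ≤ ∫ s in Ioi t, (x ^ 2 / 2) * s ^ (-(ν + 2)) := by
    apply norm_integral_le_of_norm_le
    · exact (integrableOn_Ioi_rpow_of_lt (by linarith) ht).integrable.const_mul _
    · filter_upwards [ae_restrict_mem measurableSet_Ioi] with s hs
      have hs0 : 0 < s := ht.trans hs
      have he : Real.exp (-x ^ 2 / (2 * s)) ≤ 1 := by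
        apply Real.exp_le_one_iff.mpr
        apply div_nonpos_of_nonpos_of_nonneg (neg_nonpos.mpr (by positivity)) (by positivity)
      have hu : (0:ℝ) ≤ x ^ 2 / (2 * s) := by positivity
      have hee : 1 - Real.exp (-x ^ 2 / (2 * s)) ≤ x ^ 2 / (2 * s) := by
        have := Real.add_one_le_exp (-(x ^ 2 / (2 * s)))
        have hne : -x ^ 2 / (2 * s) = -(x ^ 2 / (2 * s)) := by ring
        rw [hne]; linarith
      have hre : s ^ (-(ν + 1)) * Real.exp (-x ^ 2 / (2 * s)) - s ^ (-(ν + 1))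
          = -(s ^ (-(ν + 1)) * (1 - Real.exp (-x ^ 2 / (2 * s)))) := by ring
      rw [Real.norm_eq_abs, hre, abs_neg,
        abs_of_nonneg (mul_nonneg (Real.rpow_nonneg hs0.le _) (by linarith))]
      calc s ^ (-(ν + 1)) * (1 - Real.exp (-x ^ 2 / (2 * s)))
          ≤ s ^ (-(ν + 1)) * (x ^ 2 / (2 * s)) :=
            mul_le_mul_of_nonneg_left hee (Real.rpow_nonneg hs0.le _)
        _ = x ^ 2 / 2 * s ^ (-(ν + 2)) := by
            rw [show (-(ν + 2) : ℝ) = -(ν + 1) + (-1) by ring, Real.rpow_add hs0,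
              Real.rpow_neg_one]
            field_simp
  rw [Real.norm_eq_abs] at hbound
  calc K * |∫ s in Ioi t, (s ^ (-(ν + 1)) * Real.exp (-x ^ 2 / (2 * s)) - s ^ (-(ν + 1)))|
      ≤ K * ∫ s in Ioi t, (x ^ 2 / 2) * s ^ (-(ν + 2)) := mul_le_mul_of_nonneg_left hbound hK0
    _ = K * (x ^ 2 / 2) * (t ^ (-(ν + 1)) / (ν + 1)) := by
        rw [integral_const_mul, hint2]; ring

lemma tendA (ν x : ℝ) (hν : 0 < ν) (hν1 : ν < 1) (hx : 0 ≤ x) :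
    Tendsto (fun t : ℝ => t ^ (2 * ν) *
      (F ν x t - x ^ (2 * ν) / (2 ^ ν * Real.Gamma (ν + 1)) * t ^ (-ν))) atTop (nhds 0) := by
  set K := x ^ (2 * ν) / (2 ^ ν * Real.Gamma ν) * (x ^ 2 / 2) / (ν + 1) with hKdef
  apply squeeze_zero_norm' (a := fun t : ℝ => K * t ^ (-(1 - ν)))
  · filter_upwards [eventually_gt_atTop (0:ℝ)] with t ht
    have h1 := keyF ν x hν hx ht
    rw [Real.norm_eq_abs, abs_mul, abs_of_nonneg (Real.rpow_nonneg ht.le _)]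
    calc t ^ (2 * ν) * |F ν x t - x ^ (2 * ν) / (2 ^ ν * Real.Gamma (ν + 1)) * t ^ (-ν)|
        ≤ t ^ (2 * ν) * (x ^ (2 * ν) / (2 ^ ν * Real.Gamma ν) * (x ^ 2 / 2) *
            (t ^ (-(ν + 1)) / (ν + 1))) :=
          mul_le_mul_of_nonneg_left h1 (Real.rpow_nonneg ht.le _)
      _ = K * t ^ (-(1 - ν)) := by
          rw [show (-(1 - ν) : ℝ) = 2 * ν + -(ν + 1) by ring, Real.rpow_add ht]
          rw [hKdef]; ring
  · have := (tendsto_rpow_neg_atTop (y := 1 - ν) (by linarith)).const_mul K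
    simpa using this

lemma tendFb (ν x : ℝ) (hν : 0 < ν) (hν1 : ν < 1) (hx : 0 ≤ x) :
    Tendsto (fun t : ℝ => F ν x t) atTop (nhds 0) := by
  have h1 : Tendsto (fun t : ℝ => t ^ (-(2 * ν)) * (t ^ (2 * ν) *
      (F ν x t - x ^ (2 * ν) / (2 ^ ν * Real.Gamma (ν + 1)) * t ^ (-ν)))) atTop (nhds 0) := by
    have := (tendsto_rpow_neg_atTop (y := 2 * ν) (by linarith)).mul (tendA ν x hν hν1 hx)
    simpa using this
  have h2 : Tendsto (fun t : ℝ =>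
      F ν x t - x ^ (2 * ν) / (2 ^ ν * Real.Gamma (ν + 1)) * t ^ (-ν)) atTop (nhds 0) := by
    apply h1.congr'
    filter_upwards [eventually_gt_atTop (0:ℝ)] with t ht
    rw [← mul_assoc, ← Real.rpow_add ht]
    simp
  have h3 : Tendsto (fun t : ℝ =>
      x ^ (2 * ν) / (2 ^ ν * Real.Gamma (ν + 1)) * t ^ (-ν)) atTop (nhds 0) := by
    have := (tendsto_rpow_neg_atTop (y := ν) hν).const_mul
      (x ^ (2 * ν) / (2 ^ ν * Real.Gamma (ν + 1)))
    simpa using this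
  simpa using h2.add h3

lemma tendG (ν x : ℝ) (hν : 0 < ν) (hν1 : ν < 1) (hx : 0 ≤ x) :
    Tendsto (fun t : ℝ => t ^ ν * F ν x t) atTop
      (nhds (x ^ (2 * ν) / (2 ^ ν * Real.Gamma (ν + 1)))) := by
  have h1 : Tendsto (fun t : ℝ => t ^ (-ν) * (t ^ (2 * ν) *
      (F ν x t - x ^ (2 * ν) / (2 ^ ν * Real.Gamma (ν + 1)) * t ^ (-ν)))
      + x ^ (2 * ν) / (2 ^ ν * Real.Gamma (ν + 1))) atTop
      (nhds (x ^ (2 * ν) / (2 ^ ν * Real.Gamma (ν + 1)))) := by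
    have := ((tendsto_rpow_neg_atTop (y := ν) hν).mul (tendA ν x hν hν1 hx)).add_const
      (x ^ (2 * ν) / (2 ^ ν * Real.Gamma (ν + 1)))
    simpa using this
  apply h1.congr'
  filter_upwards [eventually_gt_atTop (0:ℝ)] with t ht
  have hne : t ^ ν ≠ 0 := (Real.rpow_pos_of_pos ht ν).ne'
  rw [← mul_assoc, ← Real.rpow_add ht, show (-ν + 2 * ν : ℝ) = ν by ring, mul_sub]
  have hc1 : t ^ ν * (x ^ (2 * ν) / (2 ^ ν * Real.Gamma (ν + 1)) * t ^ (-ν))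
      = x ^ (2 * ν) / (2 ^ ν * Real.Gamma (ν + 1)) := by
    rw [mul_comm (x ^ (2 * ν) / (2 ^ ν * Real.Gamma (ν + 1))), ← mul_assoc,
      ← Real.rpow_add ht]
    simp
  rw [hc1]
  ring

theorem stmt_14 (ν a b : ℝ) (hν : 0 < ν) (hν1 : ν < 1) (hb : 0 ≤ b) (hba : b < a) :
    Tendsto (fun t : ℝ =>
        t ^ (2 * ν) *
          ((F ν a t - F ν b t) / (1 - F ν b t) -
            ((a ^ (2 * ν) - b ^ (2 * ν)) / (2 ^ ν * Real.Gamma (ν + 1))) / t ^ ν))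
      atTop
      (nhds ((b ^ (2 * ν) / (2 ^ ν * Real.Gamma (ν + 1))) *
        ((a ^ (2 * ν) - b ^ (2 * ν)) / (2 ^ ν * Real.Gamma (ν + 1))))) := by
  have ha : (0:ℝ) ≤ a := hb.trans hba.le
  set ca := a ^ (2 * ν) / (2 ^ ν * Real.Gamma (ν + 1)) with hca
  set cb := b ^ (2 * ν) / (2 ^ ν * Real.Gamma (ν + 1)) with hcb
  have hA := tendA ν a hν hν1 ha
  have hB := tendA ν b hν hν1 hb
  have hFb := tendFb ν b hν hν1 hb
  have hG := tendG ν b hν hν1 hb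
  have hlim : Tendsto (fun t : ℝ =>
      (t ^ (2 * ν) * (F ν a t - ca * t ^ (-ν)) - t ^ (2 * ν) * (F ν b t - cb * t ^ (-ν))
        + (ca - cb) * (t ^ ν * F ν b t)) / (1 - F ν b t)) atTop
      (nhds ((0 - 0 + (ca - cb) * cb) / (1 - 0))) := by
    exact Tendsto.div ((hA.sub hB).add (hG.const_mul (ca - cb)))
      (tendsto_const_nhds.sub hFb) (by norm_num)
  have hval : (0 - 0 + (ca - cb) * cb) / (1 - 0) = cb * ((a ^ (2 * ν) - b ^ (2 * ν)) / (2 ^ ν * Real.Gamma (ν + 1))) := by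
    rw [sub_div, ← hca, ← hcb]
    ring
  rw [hval] at hlim
  apply hlim.congr'
  filter_upwards [eventually_gt_atTop (0:ℝ), hFb.eventually_lt_const one_pos] with t ht hF1
  have hden : 1 - F ν b t ≠ 0 := by linarith
  have hu : t ^ ν ≠ 0 := (Real.rpow_pos_of_pos ht ν).ne'
  have h2 : t ^ (2 * ν) = t ^ ν * t ^ ν := by rw [two_mul, Real.rpow_add ht]
  have hn : t ^ (-ν) = (t ^ ν)⁻¹ := Real.rpow_neg ht.le ν
  have hC : (a ^ (2 * ν) - b ^ (2 * ν)) / (2 ^ ν * Real.Gamma (ν + 1)) = ca - cb :=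
    sub_div _ _ _
  rw [hC, h2, hn]
  field_simp
  ring
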